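/- For every nonempty open subset U of M₃ × M₃ (subspace topology) and every index i ∈ Fin 4, there is no function h : ℝ³ → ℝ such that for all (p₁, p₂) ∈ U the i-th invariant equals h applied to the remaining three, i.e. such that ι_i(p₁,p₂) = h(ι_j(p₁,p₂), ι_k(p₁,p₂), ι_l(p₁,p₂)) for all (p₁,p₂) ∈ U, where {j,k,l} = Fin 4 \ {i}. That is, the collection (ι₁, ι₂, ι₃, ι₄) is everywhere independent on M₃ × M₃. -/

import Mathlib

open scoped RealInnerProductSpace

/-- Three-dimensional position-orientation space `M₃ = {(x, n) ∈ ℝ³ × ℝ³ | ‖n‖ = 1}`,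
topologized as a subspace of `ℝ³ × ℝ³`. -/
abbrev M3 : Type :=
  {p : EuclideanSpace ℝ (Fin 3) × EuclideanSpace ℝ (Fin 3) // ‖p.2‖ = 1}

/-- The collection of four invariants `(ι₁, ι₂, ι₃, ι₄) : M₃ × M₃ → ℝ⁴`. -/
noncomputable def iota (p : M3 × M3) : Fin 4 → ℝ :=
  ![⟪p.2.1.1 - p.1.1.1, p.1.1.2⟫, ⟪p.2.1.1 - p.1.1.1, p.2.1.2⟫,
    ⟪p.2.1.1 - p.1.1.1, p.2.1.1 - p.1.1.1⟫, ⟪p.1.1.2, p.2.1.2⟫]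

local notation "E3" => EuclideanSpace ℝ (Fin 3)

lemma exists_perp (a v w : E3) (hw : w ∉ Submodule.span ℝ {a, v}) :
    ∃ f : E3, f ≠ 0 ∧ ⟪a, f⟫ = 0 ∧ ⟪v, f⟫ = 0 ∧ ⟪w, f⟫ = ‖f‖ ^ 2 := by
  set s : Submodule ℝ E3 := Submodule.span ℝ {a, v} with hs
  set f : E3 := w - (s.orthogonalProjection w : E3) with hf
  have hfs : f ∈ sᗮ := Submodule.sub_starProjection_mem_orthogonal (K := s) w
  have hperp : ∀ u ∈ s, ⟪u, f⟫ = 0 := (Submodule.mem_orthogonal s f).mp hfs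
  have ha : a ∈ s := Submodule.subset_span (by simp)
  have hv : v ∈ s := Submodule.subset_span (by simp)
  have hfne : f ≠ 0 := by
    intro h0
    apply hw
    have : w = (s.orthogonalProjection w : E3) := by
      have h1 := sub_eq_zero.mp (hf ▸ h0)
      exact h1
    rw [this]; exact (s.orthogonalProjection w).2
  refine ⟨f, hfne, hperp a ha, hperp v hv, ?_⟩
  have : ⟪w, f⟫ = ⟪f, f⟫ + ⟪(s.orthogonalProjection w : E3), f⟫ := by
    rw [← inner_add_left]; congr 1; simp [hf]
  rw [this, hperp _ (s.orthogonalProjection w).2, real_inner_self_eq_norm_sq]; ring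

lemma exists_perp_pair (a v : E3) : ∃ f : E3, f ≠ 0 ∧ ⟪a, f⟫ = 0 ∧ ⟪v, f⟫ = 0 := by
  classical
  set s : Submodule ℝ E3 := Submodule.span ℝ {a, v} with hs
  have hcard : Module.finrank ℝ s ≤ 2 := by
    have h1 : ({a, v} : Set E3) = ↑({a, v} : Finset E3) := by simp
    rw [hs, h1]
    refine le_trans (finrank_span_finset_le_card _) (le_trans (Finset.card_insert_le _ _) ?_)
    simp
  have hne : sᗮ ≠ ⊥ := by
    intro hbot
    have h2 := Submodule.finrank_add_finrank_orthogonal s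
    rw [hbot, finrank_euclideanSpace_fin] at h2
    simp at h2
    omega
  obtain ⟨f, hfs, hfne⟩ := Submodule.exists_mem_ne_zero_of_ne_bot hne
  have hperp := (Submodule.mem_orthogonal s f).mp hfs
  exact ⟨f, hfne, hperp a (Submodule.subset_span (by simp)),
    hperp v (Submodule.subset_span (by simp))⟩

set_option maxHeartbeats 2000000 in
/-- Key moving lemma: one can move `v` on the sphere of radius `‖v‖`, keeping the inner
product with `a` fixed, while changing the inner product with `w`, by arbitrarily little. -/
lemma circle_move (a v w : E3) (ha : a ≠ 0) (hv : ∀ r : ℝ, v ≠ r • a)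
    (hw : w ∉ Submodule.span ℝ {a, v}) {ε : ℝ} (hε : 0 < ε) :
    ∃ v' : E3, ‖v'‖ = ‖v‖ ∧ ⟪a, v'⟫ = ⟪a, v⟫ ∧ ⟪w, v'⟫ ≠ ⟪w, v⟫ ∧ ‖v' - v‖ < ε := by
  have hna : ‖a‖ ≠ 0 := norm_ne_zero_iff.mpr ha
  set c : ℝ := ⟪a, v⟫ / ‖a‖ ^ 2 with hc
  set e : E3 := v - c • a with he
  have hv_eq : v = c • a + e := by rw [he]; abel
  have hae : ⟪a, e⟫ = 0 := by
    rw [he, inner_sub_right, real_inner_smul_right, real_inner_self_eq_norm_sq, hc]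
    field_simp
    ring
  have hene : e ≠ 0 := by
    intro h0
    exact hv c (by rw [hv_eq, h0, add_zero])
  have hnee : ‖e‖ ≠ 0 := norm_ne_zero_iff.mpr hene
  obtain ⟨f, hfne, haf, hvf, hwf⟩ := exists_perp a v w hw
  have hnf : ‖f‖ ≠ 0 := norm_ne_zero_iff.mpr hfne
  have hef : ⟪e, f⟫ = 0 := by
    rw [he, inner_sub_left, real_inner_smul_left, hvf, haf]; ring
  set k : ℝ := ‖e‖ / ‖f‖ with hk
  have hkpos : 0 < k := div_pos (by positivity) (by positivity)
  have hkf : k * ‖f‖ = ‖e‖ := by rw [hk]; field_simp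
  set A : ℝ := ⟪w, e⟫ with hA
  set s : ℝ := min 1 (ε / (4 * ‖e‖ + 1)) with hsdef
  have hspos : 0 < s := lt_min one_pos (by positivity)
  set t : ℝ := if A ≤ 0 then s else -s with ht
  have htne : t ≠ 0 := by
    rw [ht]; split <;> [exact ne_of_gt hspos; exact neg_ne_zero.mpr (ne_of_gt hspos)]
  have htabs : |t| = s := by
    rw [ht]; split <;> simp [abs_of_pos hspos]
  have htA : t * A ≤ 0 := by
    rw [ht]; split_ifs with h
    · exact mul_nonpos_of_nonneg_of_nonpos hspos.le h
    · nlinarith [not_le.mp h]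
  have htsq : (0:ℝ) < 1 + t ^ 2 := by positivity
  have htsqne : (1:ℝ) + t ^ 2 ≠ 0 := ne_of_gt htsq
  set v' : E3 := c • a + ((1 - t ^ 2) / (1 + t ^ 2)) • e + ((2 * t * k) / (1 + t ^ 2)) • f
    with hv'
  have hea : ⟪e, a⟫ = 0 := by rw [real_inner_comm]; exact hae
  have hfa : ⟪f, a⟫ = 0 := by rw [real_inner_comm]; exact haf
  have hfe : ⟪f, e⟫ = 0 := by rw [real_inner_comm]; exact hef
  have h_ee : ⟪e, e⟫ = k ^ 2 * ⟪f, f⟫ := by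
    rw [real_inner_self_eq_norm_sq, real_inner_self_eq_norm_sq, ← hkf]; ring
  refine ⟨v', ?_, ?_, ?_, ?_⟩
  · have h2 : ⟪v', v'⟫ = ⟪v, v⟫ := by
      rw [hv', hv_eq]
      simp only [inner_add_left, inner_add_right, real_inner_smul_left, real_inner_smul_right,
        hae, hea, haf, hfa, hef, hfe, h_ee]
      field_simp
      ring
    have h3 : ‖v'‖ ^ 2 = ‖v‖ ^ 2 := by
      rw [← real_inner_self_eq_norm_sq, ← real_inner_self_eq_norm_sq, h2]
    calc ‖v'‖ = Real.sqrt (‖v'‖ ^ 2) := (Real.sqrt_sq (norm_nonneg _)).symm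
      _ = Real.sqrt (‖v‖ ^ 2) := by rw [h3]
      _ = ‖v‖ := Real.sqrt_sq (norm_nonneg _)
  · rw [hv', hv_eq]
    simp only [inner_add_right, real_inner_smul_right, hae, haf]
    ring
  · have hdiff : ⟪w, v'⟫ - ⟪w, v⟫ = (2 * t / (1 + t ^ 2)) * (k * ‖f‖ ^ 2 - t * A) := by
      rw [hv', hv_eq]
      simp only [inner_add_right, real_inner_smul_right, hwf, ← hA]
      field_simp
      ring
    intro heq
    rw [heq, sub_self] at hdiff
    have h4 : 0 < k * ‖f‖ ^ 2 - t * A := by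
      have h4a := mul_pos hkpos (pow_pos (norm_pos_iff.mpr hfne) 2)
      linarith
    have h5 : 2 * t / (1 + t ^ 2) ≠ 0 := by
      apply div_ne_zero (by simpa using htne) htsqne
    exact h5 (by
      rcases mul_eq_zero.mp hdiff.symm with h | h
      · exact h
      · linarith)
  · set B1 : ℝ := (1 - t ^ 2) / (1 + t ^ 2) - 1 with hB1
    set B2 : ℝ := (2 * t * k) / (1 + t ^ 2) with hB2
    have hsub : v' - v = B1 • e + B2 • f := by
      rw [hv', hv_eq, hB1, sub_smul, one_smul]
      abel
    have hb : ‖v' - v‖ ≤ |B1| * ‖e‖ + |B2| * ‖f‖ := by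
      rw [hsub]
      refine le_trans (norm_add_le _ _) ?_
      rw [norm_smul, norm_smul, Real.norm_eq_abs, Real.norm_eq_abs]
    have hB1' : B1 = -(2 * t ^ 2) / (1 + t ^ 2) := by rw [hB1]; field_simp; ring
    have habs1 : |B1| ≤ 2 * t ^ 2 := by
      rw [hB1', abs_div, abs_of_pos htsq, abs_neg, abs_of_nonneg (by positivity)]
      rw [div_le_iff₀ htsq]; nlinarith [sq_nonneg t]
    have habs2 : |B2| ≤ 2 * |t| * k := by
      rw [hB2, abs_div, abs_of_pos htsq, div_le_iff₀ htsq]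
      calc |2 * t * k| = 2 * |t| * k := by
            rw [abs_mul, abs_mul, abs_of_nonneg (by norm_num : (0:ℝ) ≤ 2), abs_of_pos hkpos]
        _ ≤ 2 * |t| * k * (1 + t ^ 2) := by nlinarith [mul_nonneg (mul_nonneg (mul_nonneg (by norm_num : (0:ℝ) ≤ 2) (abs_nonneg t)) hkpos.le) (sq_nonneg t)]
    have hT : ‖v' - v‖ ≤ 4 * s * ‖e‖ := by
      have h6 : 2 * |t| * k * ‖f‖ = 2 * |t| * ‖e‖ := by rw [mul_assoc, mul_assoc, hkf]; ring
      have h7 : t ^ 2 ≤ |t| := by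
        have h7a : |t| ≤ 1 := htabs ▸ min_le_left _ _
        nlinarith [sq_abs t, abs_nonneg t]
      have hm1 := mul_le_mul_of_nonneg_right habs1 (norm_nonneg e)
      have hm2 := mul_le_mul_of_nonneg_right habs2 (norm_nonneg f)
      rw [h6, htabs] at hm2
      have hts : t ^ 2 ≤ s := le_trans h7 (le_of_eq htabs)
      nlinarith [norm_nonneg e, norm_nonneg f, hspos]
    have hfin : 4 * s * ‖e‖ < ε := by
      have h8 : s ≤ ε / (4 * ‖e‖ + 1) := min_le_right _ _
      have h9 : (0:ℝ) < 4 * ‖e‖ + 1 := by positivity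
      rw [le_div_iff₀ h9] at h8
      nlinarith [norm_nonneg e, hspos]
    linarith

set_option maxHeartbeats 1000000 in
/-- A unit vector can be perturbed to become non-parallel to a given vector. -/
lemma exists_indep_unit (n₁ n₂ : E3) (h2 : ‖n₂‖ = 1) {ε : ℝ} (hε : 0 < ε) :
    ∃ n' : E3, ‖n'‖ = 1 ∧ ‖n' - n₂‖ < ε ∧ ∀ r : ℝ, n' ≠ r • n₁ := by
  by_cases hpar : ∃ r : ℝ, n₂ = r • n₁
  · obtain ⟨ρ, hρ⟩ := hpar
    obtain ⟨u, hu0, hnu, -⟩ := exists_perp_pair n₂ n₂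
    have hnu' : ‖u‖ ≠ 0 := norm_ne_zero_iff.mpr hu0
    set u₀ : E3 := ‖u‖⁻¹ • u with hu₀
    have h2u : ⟪n₂, u₀⟫ = 0 := by rw [hu₀, real_inner_smul_right, hnu]; ring
    have hu₀n : ‖u₀‖ = 1 := by rw [hu₀, norm_smul]; simp; field_simp
    set t : ℝ := min 1 (ε / 5) with htdef
    have htpos : 0 < t := lt_min one_pos (by positivity)
    have ht1 : t ≤ 1 := min_le_left _ _
    have htsq : (0:ℝ) < 1 + t ^ 2 := by positivity
    set n' : E3 := ((1 - t ^ 2) / (1 + t ^ 2)) • n₂ + (2 * t / (1 + t ^ 2)) • u₀ with hn'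
    have hu₀n₂ : ⟪u₀, n₂⟫ = 0 := by rw [real_inner_comm]; exact h2u
    have hinner : ⟪n', n'⟫ = 1 := by
      rw [hn']
      simp only [inner_add_left, inner_add_right, real_inner_smul_left, real_inner_smul_right,
        h2u, hu₀n₂]
      rw [real_inner_self_eq_norm_sq, real_inner_self_eq_norm_sq, h2, hu₀n]
      field_simp
      ring
    have hnorm : ‖n'‖ = 1 := by
      have : ‖n'‖ ^ 2 = 1 := by rw [← real_inner_self_eq_norm_sq, hinner]
      nlinarith [norm_nonneg n']
    refine ⟨n', hnorm, ?_, ?_⟩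
    · have hsub : n' - n₂ = ((1 - t ^ 2) / (1 + t ^ 2) - 1) • n₂ + (2 * t / (1 + t ^ 2)) • u₀ := by
        rw [hn', sub_smul, one_smul]; abel
      have hc : (1 - t ^ 2) / (1 + t ^ 2) - 1 = -(2 * t ^ 2) / (1 + t ^ 2) := by
        field_simp; ring
      have hb : ‖n' - n₂‖ ≤ |(-(2 * t ^ 2) / (1 + t ^ 2))| * 1 + |2 * t / (1 + t ^ 2)| * 1 := by
        rw [hsub, hc]
        refine le_trans (norm_add_le _ _) ?_
        rw [norm_smul, norm_smul, Real.norm_eq_abs, Real.norm_eq_abs, h2, hu₀n]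
      have ha1 : |(-(2 * t ^ 2) / (1 + t ^ 2))| ≤ 2 * t ^ 2 := by
        rw [abs_div, abs_of_pos htsq, abs_neg, abs_of_nonneg (by positivity)]
        rw [div_le_iff₀ htsq]; nlinarith [sq_nonneg t]
      have ha2 : |2 * t / (1 + t ^ 2)| ≤ 2 * t := by
        rw [abs_div, abs_of_pos htsq, abs_of_nonneg (by positivity)]
        rw [div_le_iff₀ htsq]; nlinarith [sq_nonneg t, htpos.le]
      have ht5 : t ≤ ε / 5 := min_le_right _ _
      nlinarith [htpos]
    · intro r h
      have hn₁0 : ⟪u₀, n₁⟫ = 0 := by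
        have hρ0 : ρ ≠ 0 := by
          intro h0; rw [h0, zero_smul] at hρ; rw [hρ] at h2; simp at h2
        have hz : ⟪u₀, n₂⟫ = ρ * ⟪u₀, n₁⟫ := by rw [hρ, real_inner_smul_right]
        rw [hu₀n₂] at hz
        rcases mul_eq_zero.mp hz.symm with h' | h'
        · exact absurd h' hρ0
        · exact h'
      have : ⟪u₀, n'⟫ = 2 * t / (1 + t ^ 2) := by
        rw [hn']
        simp only [inner_add_right, real_inner_smul_right, hu₀n₂, real_inner_self_eq_norm_sq, hu₀n]
        ring
      rw [h, real_inner_smul_right, hn₁0] at this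
      have : 2 * t / (1 + t ^ 2) = 0 := by linarith
      rw [div_eq_zero_iff] at this
      rcases this with h' | h' <;> [linarith; linarith]
  · exact ⟨n₂, h2, by simpa using hε, fun r h => hpar ⟨r, h⟩⟩

/-- Any configuration can be perturbed to a "generic" one. -/
lemma exists_generic (x₁ n₁ x₂ n₂ : E3) (h2 : ‖n₂‖ = 1) {ε : ℝ} (hε : 0 < ε) :
    ∃ x₂' n₂' : E3, ‖n₂'‖ = 1 ∧ ‖x₂' - x₂‖ < ε ∧ ‖n₂' - n₂‖ < ε ∧
      (∀ r : ℝ, n₂' ≠ r • n₁) ∧ (x₂' - x₁) ∉ Submodule.span ℝ {n₁, n₂'} := by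
  obtain ⟨n₂', hn', hclose, hind⟩ := exists_indep_unit n₁ n₂ h2 hε
  obtain ⟨f, hf0, hf1, hf2⟩ := exists_perp_pair n₁ n₂'
  have hnf : (0:ℝ) < ‖f‖ := norm_pos_iff.mpr hf0
  set d : E3 := x₂ - x₁ with hd
  set s : ℝ := (if 0 ≤ ⟪f, d⟫ then 1 else -1) * (ε / (2 * (‖f‖ + 1))) with hs
  have hsne : s ≠ 0 := by
    rw [hs]
    apply mul_ne_zero
    · split <;> norm_num
    · positivity
  have hsabs : |s| = ε / (2 * (‖f‖ + 1)) := by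
    rw [hs, abs_mul]
    have : |ε / (2 * (‖f‖ + 1))| = ε / (2 * (‖f‖ + 1)) := abs_of_pos (by positivity)
    rw [this]
    split <;> simp
  have hkey : ⟪f, d⟫ + s * ‖f‖ ^ 2 ≠ 0 := by
    rw [hs]
    split_ifs with h
    · have : 0 < 1 * (ε / (2 * (‖f‖ + 1))) * ‖f‖ ^ 2 + ⟪f, d⟫ := by positivity
      intro hc; nlinarith
    · push_neg at h
      have h1 : (-1) * (ε / (2 * (‖f‖ + 1))) * ‖f‖ ^ 2 ≤ 0 := by
        have : 0 ≤ (ε / (2 * (‖f‖ + 1))) * ‖f‖ ^ 2 := by positivity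
        nlinarith
      intro hc; nlinarith
  refine ⟨x₂ + s • f, n₂', hn', ?_, hclose, hind, ?_⟩
  · have : ‖x₂ + s • f - x₂‖ = |s| * ‖f‖ := by
      rw [add_sub_cancel_left, norm_smul, Real.norm_eq_abs]
    rw [this, hsabs]
    rw [div_mul_eq_mul_div, div_lt_iff₀ (by positivity)]
    nlinarith [hnf]
  · intro hmem
    obtain ⟨α, β, hab⟩ := Submodule.mem_span_pair.mp hmem
    have hip : ⟪f, x₂ + s • f - x₁⟫ = ⟪f, d⟫ + s * ‖f‖ ^ 2 := by
      have he : x₂ + s • f - x₁ = d + s • f := by rw [hd]; abel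
      rw [he, inner_add_right, real_inner_smul_right, real_inner_self_eq_norm_sq]
    apply hkey
    have hf1' : ⟪f, n₁⟫ = 0 := by rw [real_inner_comm]; exact hf1
    have hf2' : ⟪f, n₂'⟫ = 0 := by rw [real_inner_comm]; exact hf2
    rw [← hip, ← hab, inner_add_right, real_inner_smul_right, real_inner_smul_right, hf1', hf2']
    ring

/-- Derived independence facts. -/
lemma generic_facts (d n₁ n₂' : E3) (h1 : ‖n₁‖ = 1) (h2 : ‖n₂'‖ = 1)
    (F1 : ∀ r : ℝ, n₂' ≠ r • n₁) (F2 : d ∉ Submodule.span ℝ {n₁, n₂'}) :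
    d ≠ 0 ∧ (∀ r : ℝ, n₁ ≠ r • n₂') ∧ d ∉ Submodule.span ℝ {n₂', n₁} ∧
    (∀ r : ℝ, n₂' ≠ r • d) ∧ n₁ ∉ Submodule.span ℝ {d, n₂'} := by
  have hn1 : n₁ ≠ 0 := by intro h; rw [h] at h1; simp at h1
  have hn2 : n₂' ≠ 0 := by intro h; rw [h] at h2; simp at h2
  have hd0 : d ≠ 0 := by
    intro h; exact F2 (h ▸ Submodule.zero_mem _)
  refine ⟨hd0, ?_, ?_, ?_, ?_⟩
  · intro r h
    have hr : r ≠ 0 := by intro h0; rw [h0, zero_smul] at h; exact hn1 h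
    exact F1 r⁻¹ (by rw [h, smul_smul, inv_mul_cancel₀ hr, one_smul])
  · rw [Set.pair_comm]; exact F2
  · intro r h
    have hr : r ≠ 0 := by intro h0; rw [h0, zero_smul] at h; exact hn2 h
    apply F2
    have hdr : d = r⁻¹ • n₂' := by rw [h, smul_smul, inv_mul_cancel₀ hr, one_smul]
    exact Submodule.mem_span_pair.mpr ⟨0, r⁻¹, by rw [zero_smul, zero_add, ← hdr]⟩
  · intro hmem
    obtain ⟨α, β, hab⟩ := Submodule.mem_span_pair.mp hmem
    by_cases hα : α = 0
    · rw [hα, zero_smul, zero_add] at hab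
      exact F1 β⁻¹ (by
        have hb : β ≠ 0 := by intro h0; rw [h0, zero_smul] at hab; exact hn1 hab.symm
        rw [← hab, smul_smul, inv_mul_cancel₀ hb, one_smul])
    · apply F2
      have h5 : α • d = n₁ - β • n₂' := by rw [← hab]; abel
      have h6 : d = α⁻¹ • n₁ - (α⁻¹ * β) • n₂' := by
        have h7 : α⁻¹ • (α • d) = α⁻¹ • (n₁ - β • n₂') := by rw [h5]
        rwa [smul_smul, inv_mul_cancel₀ hα, one_smul, smul_sub, smul_smul] at h7
      exact Submodule.mem_span_pair.mpr ⟨α⁻¹, -(α⁻¹ * β), by rw [neg_smul, ← sub_eq_add_neg, ← h6]⟩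

lemma distM3 (p q : M3 × M3) :
    dist p q = max (max ‖p.1.1.1 - q.1.1.1‖ ‖p.1.1.2 - q.1.1.2‖)
      (max ‖p.2.1.1 - q.2.1.1‖ ‖p.2.1.2 - q.2.1.2‖) := by
  rw [Prod.dist_eq, Subtype.dist_eq, Subtype.dist_eq, Prod.dist_eq, Prod.dist_eq]
  simp [dist_eq_norm]

set_option maxHeartbeats 2000000 in
/-- The collection `(ι₁, ι₂, ι₃, ι₄)` is everywhere independent on `M₃ × M₃`: on no
nonempty open subset can one of the invariants be written as a function of the
remaining three. -/
theorem invariants_everywhere_independent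
    (U : Set (M3 × M3)) (hU : IsOpen U) (hne : U.Nonempty) (i : Fin 4) :
    ¬ ∃ h : ({j : Fin 4 // j ≠ i} → ℝ) → ℝ,
      ∀ p ∈ U, iota p i = h (fun j => iota p j.val) := by
  rintro ⟨h, hh⟩
  obtain ⟨p₀, hp₀⟩ := hne
  obtain ⟨ε, hε, hball⟩ := Metric.isOpen_iff.mp hU p₀ hp₀
  set x₁ : E3 := p₀.1.1.1 with hx₁
  set n₁ : E3 := p₀.1.1.2 with hn₁d
  set x₂ : E3 := p₀.2.1.1 with hx₂
  set n₂ : E3 := p₀.2.1.2 with hn₂d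
  have hn1 : ‖n₁‖ = 1 := p₀.1.2
  obtain ⟨x₂', n₂', hn2', hx2c, hn2c, F1, F2⟩ :=
    exists_generic x₁ n₁ x₂ n₂ p₀.2.2 (by positivity : (0:ℝ) < ε / 4)
  set P : M3 × M3 := (⟨(x₁, n₁), hn1⟩, ⟨(x₂', n₂'), hn2'⟩) with hP
  have hdP : dist P p₀ < ε / 2 := by
    rw [distM3]
    have e1 : ‖(P.1.1.1 : E3) - p₀.1.1.1‖ = 0 := by simp [hP, hx₁]
    have e2 : ‖(P.1.1.2 : E3) - p₀.1.1.2‖ = 0 := by simp [hP, hn₁d]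
    have e3 : ‖(P.2.1.1 : E3) - p₀.2.1.1‖ < ε / 4 := hx2c
    have e4 : ‖(P.2.1.2 : E3) - p₀.2.1.2‖ < ε / 4 := hn2c
    rw [e1, e2]
    refine max_lt (max_lt (by positivity) (by positivity)) (max_lt ?_ ?_) <;> linarith
  have hPU : P ∈ U := hball (by rw [Metric.mem_ball]; linarith)
  have hsub2 : ∀ q : M3 × M3, dist q P < ε / 2 → q ∈ U := by
    intro q hq
    apply hball
    rw [Metric.mem_ball]
    calc dist q p₀ ≤ dist q P + dist P p₀ := dist_triangle _ _ _
      _ < ε := by linarith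
  set d : E3 := x₂' - x₁ with hdd
  obtain ⟨hd0, G1, G2, G3, G4⟩ := generic_facts d n₁ n₂' hn1 hn2' F1 F2
  have hn1' : n₁ ≠ 0 := by intro h0; rw [h0] at hn1; simp at hn1
  have hn2'0 : n₂' ≠ 0 := by intro h0; rw [h0] at hn2'; simp at hn2'
  have key : ∀ q : M3 × M3, q ∈ U → (∀ j : Fin 4, j ≠ i → iota P j = iota q j) →
      iota P i = iota q i := by
    intro q hqU heq
    rw [hh P hPU, hh q hqU]
    congr 1
    funext j
    exact heq j.1 j.2
  have hhalf : (0:ℝ) < ε / 2 := by positivity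
  fin_cases i
  -- case i = 0
  · obtain ⟨n₁'', hnorm, hfix, hchg, hcl⟩ := circle_move n₂' n₁ d hn2'0 G1 G2 hhalf
    set q : M3 × M3 := (⟨(x₁, n₁''), by rw [hnorm]; exact hn1⟩, ⟨(x₂', n₂'), hn2'⟩) with hq
    have hqU : q ∈ U := by
      apply hsub2
      rw [distM3]
      have e1 : ‖(q.1.1.1 : E3) - P.1.1.1‖ = 0 := by simp [hq, hP]
      have e2 : ‖(q.1.1.2 : E3) - P.1.1.2‖ < ε / 2 := hcl
      have e3 : ‖(q.2.1.1 : E3) - P.2.1.1‖ = 0 := by simp [hq, hP]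
      have e4 : ‖(q.2.1.2 : E3) - P.2.1.2‖ = 0 := by simp [hq, hP]
      rw [e1, e3, e4]
      exact max_lt (max_lt (by positivity) e2) (max_lt (by positivity) (by positivity))
    have heq : ∀ j : Fin 4, j ≠ 0 → iota P j = iota q j := by
      intro j hj
      fin_cases j
      · exact absurd rfl hj
      · rfl
      · rfl
      · show ⟪n₁, n₂'⟫ = ⟪n₁'', n₂'⟫
        calc ⟪n₁, n₂'⟫ = ⟪n₂', n₁⟫ := real_inner_comm _ _
          _ = ⟪n₂', n₁''⟫ := hfix.symm
          _ = ⟪n₁'', n₂'⟫ := real_inner_comm _ _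
    exact hchg ((key q hqU heq).symm)
  -- case i = 1
  · obtain ⟨n₂'', hnorm, hfix, hchg, hcl⟩ := circle_move n₁ n₂' d hn1' F1 F2 hhalf
    set q : M3 × M3 := (⟨(x₁, n₁), hn1⟩, ⟨(x₂', n₂''), by rw [hnorm]; exact hn2'⟩) with hq
    have hqU : q ∈ U := by
      apply hsub2
      rw [distM3]
      have e1 : ‖(q.1.1.1 : E3) - P.1.1.1‖ = 0 := by simp [hq, hP]
      have e2 : ‖(q.1.1.2 : E3) - P.1.1.2‖ = 0 := by simp [hq, hP]
      have e3 : ‖(q.2.1.1 : E3) - P.2.1.1‖ = 0 := by simp [hq, hP]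
      have e4 : ‖(q.2.1.2 : E3) - P.2.1.2‖ < ε / 2 := hcl
      rw [e1, e2, e3]
      exact max_lt (max_lt (by positivity) (by positivity)) (max_lt (by positivity) e4)
    have heq : ∀ j : Fin 4, j ≠ 1 → iota P j = iota q j := by
      intro j hj
      fin_cases j
      · rfl
      · exact absurd rfl hj
      · rfl
      · exact hfix.symm
    exact hchg ((key q hqU heq).symm)
  -- case i = 2
  · obtain ⟨f, hf0, hf1, hf2, hfd⟩ := exists_perp n₁ n₂' d F2
    have hnf : (0:ℝ) < ‖f‖ := norm_pos_iff.mpr hf0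
    set s : ℝ := ε / (4 * (‖f‖ + 1)) with hs
    have hspos : 0 < s := by positivity
    set q : M3 × M3 := (⟨(x₁, n₁), hn1⟩, ⟨(x₂' + s • f, n₂'), hn2'⟩) with hq
    have hde : x₂' + s • f - x₁ = d + s • f := by rw [hdd]; abel
    have hqU : q ∈ U := by
      apply hsub2
      rw [distM3]
      have e1 : ‖(q.1.1.1 : E3) - P.1.1.1‖ = 0 := by simp [hq, hP]
      have e2 : ‖(q.1.1.2 : E3) - P.1.1.2‖ = 0 := by simp [hq, hP]
      have e3 : ‖(q.2.1.1 : E3) - P.2.1.1‖ < ε / 2 := by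
        show ‖x₂' + s • f - x₂'‖ < ε / 2
        rw [add_sub_cancel_left, norm_smul, Real.norm_eq_abs, abs_of_pos hspos, hs]
        rw [div_mul_eq_mul_div, div_lt_iff₀ (by positivity)]
        nlinarith
      have e4 : ‖(q.2.1.2 : E3) - P.2.1.2‖ = 0 := by simp [hq, hP]
      rw [e1, e2, e4]
      exact max_lt (max_lt (by positivity) (by positivity)) (max_lt e3 (by positivity))
    have hf1' : ⟪f, n₁⟫ = 0 := by rw [real_inner_comm]; exact hf1
    have hf2' : ⟪f, n₂'⟫ = 0 := by rw [real_inner_comm]; exact hf2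
    have hfd' : ⟪f, d⟫ = ‖f‖ ^ 2 := by rw [real_inner_comm]; exact hfd
    have heq : ∀ j : Fin 4, j ≠ 2 → iota P j = iota q j := by
      intro j hj
      fin_cases j
      · show ⟪d, n₁⟫ = ⟪x₂' + s • f - x₁, n₁⟫
        rw [hde, inner_add_left, real_inner_smul_left, hf1', mul_zero, add_zero]
      · show ⟪d, n₂'⟫ = ⟪x₂' + s • f - x₁, n₂'⟫
        rw [hde, inner_add_left, real_inner_smul_left, hf2', mul_zero, add_zero]
      · exact absurd rfl hj
      · rfl
    have hval : (⟪x₂' + s • f - x₁, x₂' + s • f - x₁⟫ : ℝ)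
        = ⟪d, d⟫ + 2 * s * ‖f‖ ^ 2 + s ^ 2 * ‖f‖ ^ 2 := by
      rw [hde]
      simp only [inner_add_left, inner_add_right, real_inner_smul_left, real_inner_smul_right,
        hfd, hfd']
      rw [real_inner_self_eq_norm_sq f]
      ring
    have hke : (⟪d, d⟫ : ℝ) = ⟪x₂' + s • f - x₁, x₂' + s • f - x₁⟫ := key q hqU heq
    rw [hval] at hke
    have hpos : (0:ℝ) < 2 * s * ‖f‖ ^ 2 + s ^ 2 * ‖f‖ ^ 2 := by positivity
    linarith
  -- case i = 3
  · obtain ⟨n₂'', hnorm, hfix, hchg, hcl⟩ := circle_move d n₂' n₁ hd0 G3 G4 hhalf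
    set q : M3 × M3 := (⟨(x₁, n₁), hn1⟩, ⟨(x₂', n₂''), by rw [hnorm]; exact hn2'⟩) with hq
    have hqU : q ∈ U := by
      apply hsub2
      rw [distM3]
      have e1 : ‖(q.1.1.1 : E3) - P.1.1.1‖ = 0 := by simp [hq, hP]
      have e2 : ‖(q.1.1.2 : E3) - P.1.1.2‖ = 0 := by simp [hq, hP]
      have e3 : ‖(q.2.1.1 : E3) - P.2.1.1‖ = 0 := by simp [hq, hP]
      have e4 : ‖(q.2.1.2 : E3) - P.2.1.2‖ < ε / 2 := hcl
      rw [e1, e2, e3]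
      exact max_lt (max_lt (by positivity) (by positivity)) (max_lt (by positivity) e4)
    have heq : ∀ j : Fin 4, j ≠ 3 → iota P j = iota q j := by
      intro j hj
      fin_cases j
      · rfl
      · exact hfix.symm
      · rfl
      · exact absurd rfl hj
    exact hchg ((key q hqU heq).symm)
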